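/- arXiv:2304.00859 — 5 statements merged into one kernel-verified Lean document; each statement's English description precedes it below -/
import Mathlib

section
/- For every finite simple graph G of order n with minimum degree δ(G) ≥ 1 (in particular G has at least one edge), the strength of G satisfies str(G) ≥ n + δ(G). -/
open SimpleGraph

/-- The strength of a numbering `f` of a graph `G` on `Fin n`: the maximum value of
`(f u + 1) + (f v + 1)` over edges `uv` of `G` (labels are the 1-based values `f · + 1`). -/
noncomputable def strOf {n : ℕ} (G : SimpleGraph (Fin n)) (f : Fin n ≃ Fin n) : ℕ :=
  sSup {s | ∃ u v, G.Adj u v ∧ s = ((f u : ℕ) + 1) + ((f v : ℕ) + 1)}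

/-- The strength of a graph `G` on `Fin n`: the minimum over all numberings
(bijections `Fin n ≃ Fin n`) of the maximum edge label. -/
noncomputable def str {n : ℕ} (G : SimpleGraph (Fin n)) : ℕ :=
  sInf {s | ∃ f : Fin n ≃ Fin n, s = strOf G f}

/-- The domination number: minimum size of a set `S` such that every vertex not
in `S` is adjacent to some vertex of `S`. -/
noncomputable def dominationNumber {n : ℕ} (G : SimpleGraph (Fin n)) : ℕ :=
  sInf {k | ∃ S : Finset (Fin n), (∀ v ∉ S, ∃ u ∈ S, G.Adj u v) ∧ S.card = k}

/-- The independence number: maximum size of a set of pairwise non-adjacent vertices. -/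
noncomputable def indepNumber {n : ℕ} (G : SimpleGraph (Fin n)) : ℕ :=
  sSup {k | ∃ S : Finset (Fin n), (∀ u ∈ S, ∀ v ∈ S, u ≠ v → ¬ G.Adj u v) ∧ S.card = k}

/-- The vertex covering number: minimum size of a set of vertices meeting every edge. -/
noncomputable def vertexCoverNumber {n : ℕ} (G : SimpleGraph (Fin n)) : ℕ :=
  sInf {k | ∃ S : Finset (Fin n), (∀ u v, G.Adj u v → u ∈ S ∨ v ∈ S) ∧ S.card = k}

/-- The edge covering number: minimum size of a set of edges covering every vertex. -/
noncomputable def edgeCoverNumber {n : ℕ} (G : SimpleGraph (Fin n)) : ℕ :=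
  sInf {k | ∃ E : Finset (Sym2 (Fin n)),
    (∀ e ∈ E, e ∈ G.edgeSet) ∧ (∀ v : Fin n, ∃ e ∈ E, v ∈ e) ∧ E.card = k}

/-- The matching (edge independence) number: maximum size of a set of pairwise
non-incident edges. -/
noncomputable def matchingNumber {n : ℕ} (G : SimpleGraph (Fin n)) : ℕ :=
  sSup {k | ∃ M : Finset (Sym2 (Fin n)),
    (∀ e ∈ M, e ∈ G.edgeSet) ∧
    (∀ e ∈ M, ∀ e' ∈ M, e ≠ e' → ∀ v : Fin n, v ∈ e → v ∉ e') ∧ M.card = k}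

/-- The graph `F_k` on vertices `v_1, …, v_k` (here `v_i` is `⟨i-1, _⟩ : Fin k`), with
`v_i` adjacent to `v_j` iff `1 ≤ i ≤ ⌊k/2⌋` and `i + 1 ≤ j ≤ k + 1 - i`. -/
noncomputable def Fgraph (k : ℕ) : SimpleGraph (Fin k) :=
  SimpleGraph.fromRel (fun a b =>
    (a : ℕ) + 1 ≤ k / 2 ∧ (a : ℕ) + 2 ≤ (b : ℕ) + 1 ∧ (b : ℕ) + 1 ≤ k + 1 - ((a : ℕ) + 1))

/-- `G` contains `F_k` as a subgraph: there is an injective graph homomorphism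
from `F_k` into `G`. -/
noncomputable def ContainsF {n : ℕ} (G : SimpleGraph (Fin n)) (k : ℕ) : Prop :=
  ∃ φ : Fgraph k →g G, Function.Injective φ

/-- For every graph `G` of order `n` with minimum degree `δ(G) ≥ 1`,
`str(G) ≥ n + δ(G)`. -/
theorem strength_ge_order_add_minDegree (n : ℕ) (G : SimpleGraph (Fin n))
    [DecidableRel G.Adj] (hδ : 1 ≤ G.minDegree) :
    n + G.minDegree ≤ str G := by
  have hn : 0 < n := by
    by_contra h
    push_neg at h
    interval_cases n
    simp [SimpleGraph.minDegree] at hδ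
  unfold str
  apply le_csInf
  · exact ⟨strOf G (Equiv.refl _), Equiv.refl _, rfl⟩
  rintro s ⟨f, rfl⟩
  unfold strOf
  set u := f.symm ⟨n - 1, by omega⟩ with hu
  have hfu : (f u : ℕ) = n - 1 := by simp [hu]
  set N := G.neighborFinset u with hN
  have hcard : G.minDegree ≤ N.card := by
    simpa [hN, SimpleGraph.card_neighborFinset_eq_degree] using G.minDegree_le_degree u
  set T := N.image (fun w => ((f w : ℕ))) with hTdef
  have hT : T.card = N.card :=
    Finset.card_image_of_injective _ (fun a b h => f.injective (Fin.val_injective h))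
  have hTne : T.Nonempty := by rw [← Finset.card_pos, hT]; omega
  have hmax : T.card ≤ T.max' hTne + 1 := by
    have hsub : T ⊆ Finset.range (T.max' hTne + 1) := fun x hx =>
      Finset.mem_range.mpr (Nat.lt_succ_of_le (Finset.le_max' T x hx))
    simpa using Finset.card_le_card hsub
  obtain ⟨w, hwN, hw⟩ := Finset.mem_image.mp (T.max'_mem hTne)
  have hadj : G.Adj u w := (SimpleGraph.mem_neighborFinset _ _ _).mp hwN
  have hmem : ((f u : ℕ) + 1) + ((f w : ℕ) + 1) ∈
      {s | ∃ a b, G.Adj a b ∧ s = ((f a : ℕ) + 1) + ((f b : ℕ) + 1)} := ⟨u, w, hadj, rfl⟩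
  have hbdd : BddAbove {s | ∃ a b, G.Adj a b ∧ s = ((f a : ℕ) + 1) + ((f b : ℕ) + 1)} := by
    refine ⟨2 * n + 2, ?_⟩
    rintro x ⟨a, b, _, rfl⟩
    have := (f a).isLt; have := (f b).isLt
    omega
  have hle := le_csSup hbdd hmem
  have : n + G.minDegree ≤ ((f u : ℕ) + 1) + ((f w : ℕ) + 1) := by omega
  calc n + G.minDegree ≤ _ := this
    _ ≤ _ := hle
end

section
/- Let G be a finite simple graph of order n with at least one edge, and let k be an integer with 2 ≤ k ≤ n−1. Then str(G) ≤ 2n − k if and only if the complement of G contains F_k as a subgraph (equivalently, there is an injective graph homomorphism from F_k into the complement of G). -/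
open SimpleGraph

lemma exists_perm_extend {n k : ℕ} (φ ψ : Fin k → Fin n)
    (hφ : Function.Injective φ) (hψ : Function.Injective ψ) :
    ∃ f : Fin n ≃ Fin n, ∀ a, f (φ a) = ψ a := by
  classical
  have hcard : Fintype.card ↥(Set.range φ)ᶜ = Fintype.card ↥(Set.range ψ)ᶜ := by
    rw [Fintype.card_compl_set, Fintype.card_compl_set, Set.card_range_of_injective hφ,
      Set.card_range_of_injective hψ]
  let e1 : Set.range φ ≃ Set.range ψ :=
    (Equiv.ofInjective φ hφ).symm.trans (Equiv.ofInjective ψ hψ)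
  let e2 : ↥(Set.range φ)ᶜ ≃ ↥(Set.range ψ)ᶜ := Fintype.equivOfCardEq hcard
  refine ⟨(Equiv.sumCompl (· ∈ Set.range φ)).symm.trans
    ((e1.sumCongr e2).trans (Equiv.sumCompl (· ∈ Set.range ψ))), ?_⟩
  intro a
  have h1 : (Equiv.sumCompl (· ∈ Set.range φ)).symm (φ a) = Sum.inl ⟨φ a, ⟨a, rfl⟩⟩ :=
    Equiv.sumCompl_symm_apply_of_pos ⟨a, rfl⟩
  have h2 : e1 ⟨φ a, ⟨a, rfl⟩⟩ = ⟨ψ a, ⟨a, rfl⟩⟩ := by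
    simp only [e1, Equiv.trans_apply]
    rw [Equiv.ofInjective_symm_apply]
    rfl
  calc ((Equiv.sumCompl (· ∈ Set.range φ)).symm.trans
        ((e1.sumCongr e2).trans (Equiv.sumCompl (· ∈ Set.range ψ)))) (φ a)
      = (Equiv.sumCompl (· ∈ Set.range ψ))
          ((e1.sumCongr e2) ((Equiv.sumCompl (· ∈ Set.range φ)).symm (φ a))) := rfl
    _ = (Equiv.sumCompl (· ∈ Set.range ψ)) ((e1.sumCongr e2) (Sum.inl ⟨φ a, ⟨a, rfl⟩⟩)) := by
        rw [h1]
    _ = (Equiv.sumCompl (· ∈ Set.range ψ)) (Sum.inl (e1 ⟨φ a, ⟨a, rfl⟩⟩)) := rfl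
    _ = (Equiv.sumCompl (· ∈ Set.range ψ)) (Sum.inl (⟨ψ a, ⟨a, rfl⟩⟩ : Set.range ψ)) := by
        rw [h2]
    _ = ψ a := rfl

/-- For a graph `G` of order `n` with at least one edge and `2 ≤ k ≤ n - 1`,
`str(G) ≤ 2n - k` iff the complement of `G` contains `F_k` as a subgraph. -/
theorem strength_le_iff_compl_containsF (n k : ℕ) (G : SimpleGraph (Fin n))
    (hE : G.edgeSet.Nonempty) (hk₁ : 2 ≤ k) (hk₂ : k ≤ n - 1) :
    str G ≤ 2 * n - k ↔ ContainsF Gᶜ k := by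
  classical
  have hn : 3 ≤ n := by omega
  have hkn : k < n := by omega
  obtain ⟨e0, he0⟩ := hE
  induction e0 using Sym2.ind with | _ u0 v0 =>
  rw [SimpleGraph.mem_edgeSet] at he0
  -- the strOf edge-sum set is nonempty and bounded for any f
  have hne : ∀ f : Fin n ≃ Fin n,
      {s | ∃ u v, G.Adj u v ∧ s = ((f u : ℕ) + 1) + ((f v : ℕ) + 1)}.Nonempty :=
    fun f => ⟨_, u0, v0, he0, rfl⟩
  have hbdd : ∀ f : Fin n ≃ Fin n,
      BddAbove {s | ∃ u v, G.Adj u v ∧ s = ((f u : ℕ) + 1) + ((f v : ℕ) + 1)} := by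
    intro f
    refine ⟨2 * n, ?_⟩
    rintro s ⟨u, v, _, rfl⟩
    have := (f u).isLt; have := (f v).isLt
    omega
  constructor
  · intro hstr
    have hsne : {s | ∃ f : Fin n ≃ Fin n, s = strOf G f}.Nonempty :=
      ⟨strOf G (Equiv.refl _), Equiv.refl _, rfl⟩
    obtain ⟨f, hf⟩ := Nat.sInf_mem hsne
    rw [str] at hstr
    rw [hf] at hstr
    -- hstr : strOf G f ≤ 2*n - k
    have hedge : ∀ u v, G.Adj u v → ((f u : ℕ) + 1) + ((f v : ℕ) + 1) ≤ 2 * n - k := by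
      intro u v huv
      exact le_trans (le_csSup (hbdd f) ⟨u, v, huv, rfl⟩) hstr
    set φ : Fin k → Fin n := fun a => f.symm ⟨n - 1 - (a : ℕ), by omega⟩ with hφdef
    have hφinj : Function.Injective φ := by
      intro a b hab
      have := f.symm.injective hab
      have h2 : n - 1 - (a : ℕ) = n - 1 - (b : ℕ) := Fin.mk.inj_iff.mp this
      have ha := a.isLt; have hb := b.isLt
      exact Fin.ext (by omega)
    have hφval : ∀ a : Fin k, (f (φ a) : ℕ) = n - 1 - (a : ℕ) := by
      intro a
      simp [hφdef, Equiv.apply_symm_apply]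
    refine ⟨⟨φ, ?_⟩, hφinj⟩
    intro a b hab
    rw [Fgraph, SimpleGraph.fromRel_adj] at hab
    obtain ⟨hne', hrel⟩ := hab
    rw [SimpleGraph.compl_adj]
    refine ⟨fun h => hne' (hφinj h), ?_⟩
    intro hadj
    have hsum := hedge _ _ hadj
    rw [hφval a, hφval b] at hsum
    have ha := a.isLt; have hb := b.isLt
    rcases hrel with ⟨h1, h2, h3⟩ | ⟨h1, h2, h3⟩ <;> omega
  · rintro ⟨φ, hφinj⟩
    set ψ : Fin k → Fin n := fun a => ⟨n - 1 - (a : ℕ), by omega⟩ with hψdef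
    have hψinj : Function.Injective ψ := by
      intro a b hab
      have h2 : n - 1 - (a : ℕ) = n - 1 - (b : ℕ) := Fin.mk.inj_iff.mp hab
      have ha := a.isLt; have hb := b.isLt
      exact Fin.ext (by omega)
    obtain ⟨f, hf⟩ := exists_perm_extend (fun a => φ a) ψ (fun _ _ h => hφinj h) hψinj
    have hval : ∀ a : Fin k, (f (φ a) : ℕ) = n - 1 - (a : ℕ) := by
      intro a; rw [hf a]
    -- vertices outside the range of φ get small labels
    have hout : ∀ w : Fin n, (¬ ∃ a, φ a = w) → (f w : ℕ) < n - k := by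
      intro w hw
      by_contra hge
      push_neg at hge
      have hlt := (f w).isLt
      set a : Fin k := ⟨n - 1 - (f w : ℕ), by omega⟩ with hadef
      apply hw
      refine ⟨a, f.injective ?_⟩
      rw [hf a]
      apply Fin.ext
      show n - 1 - (a : ℕ) = (f w : ℕ)
      simp only [hadef]
      omega
    have hle : strOf G f ≤ 2 * n - k := by
      apply csSup_le (hne f)
      rintro s ⟨u, v, huv, rfl⟩
      by_cases hu : ∃ a, φ a = u
      · obtain ⟨a, rfl⟩ := hu
        by_cases hv : ∃ b, φ b = v
        · obtain ⟨b, rfl⟩ := hv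
          have hab : a ≠ b := fun h => huv.ne (by rw [h])
          have hnadj : ¬ (Fgraph k).Adj a b := by
            intro h
            exact ((φ.map_adj h).2 huv).elim
          rw [Fgraph, SimpleGraph.fromRel_adj] at hnadj
          push_neg at hnadj
          obtain ⟨h1, h2⟩ := hnadj hab
          rw [hval a, hval b]
          have ha := a.isLt; have hb := b.isLt
          omega
        · have h1 := hval a
          have h2 := hout v hv
          have ha := a.isLt
          omega
      · have h1 := hout u hu
        by_cases hv : ∃ b, φ b = v
        · obtain ⟨b, rfl⟩ := hv
          have h2 := hval b
          have hb := b.isLt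
          omega
        · have h2 := hout v hv
          omega
    exact le_trans (Nat.sInf_le ⟨f, rfl⟩) hle
end

section
/- Let G be a finite simple graph of order n with at least one edge whose minimum degree satisfies δ(G) = n − k, where k is an integer with 2 ≤ k ≤ n−1. Then str(G) = n + δ(G) if and only if the complement of G contains F_k as a subgraph. -/
open SimpleGraph

lemma card_filter_val_lt (n m : ℕ) (h : m ≤ n) :
    (Finset.univ.filter (fun w : Fin n => (w : ℕ) < m)).card = m := by
  have : (Finset.univ.filter (fun w : Fin n => (w : ℕ) < m))
      = Finset.map (Fin.castLEEmb h) Finset.univ := by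
    ext x
    simp only [Finset.mem_filter, Finset.mem_univ, true_and, Finset.mem_map,
      Fin.castLEEmb_apply]
    constructor
    · intro hx
      exact ⟨⟨x, hx⟩, rfl⟩
    · rintro ⟨a, rfl⟩
      exact a.isLt
  rw [this, Finset.card_map, Finset.card_univ, Fintype.card_fin]

lemma exists_perm_comp {n k : ℕ} (φ g : Fin k → Fin n)
    (hφ : Function.Injective φ) (hg : Function.Injective g) :
    ∃ σ : Fin n ≃ Fin n, ∀ a : Fin k, σ (φ a) = g a := by
  classical
  have c1 : Fintype.card (Set.range φ) = k := by
    rw [Set.card_range_of_injective hφ, Fintype.card_fin]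
  have c2 : Fintype.card (Set.range g) = k := by
    rw [Set.card_range_of_injective hg, Fintype.card_fin]
  have cc : Fintype.card ↥(Set.range φ)ᶜ = Fintype.card ↥(Set.range g)ᶜ := by
    rw [Fintype.card_compl_set, Fintype.card_compl_set, c1, c2]
  let e₁ := Equiv.ofInjective φ hφ
  let e₂ := Equiv.ofInjective g hg
  let eC := Fintype.equivOfCardEq cc
  refine ⟨(Equiv.Set.sumCompl (Set.range φ)).symm.trans
    ((Equiv.sumCongr (e₁.symm.trans e₂) eC).trans (Equiv.Set.sumCompl (Set.range g))), ?_⟩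
  intro a
  have h1 : (Equiv.Set.sumCompl (Set.range φ)).symm (φ a)
      = Sum.inl ⟨φ a, Set.mem_range_self a⟩ :=
    Equiv.Set.sumCompl_symm_apply_of_mem (Set.mem_range_self a)
  have h2 : e₁.symm ⟨φ a, Set.mem_range_self a⟩ = a := by
    simp [e₁, Equiv.ofInjective_symm_apply]
  simp [Equiv.trans_apply, h1, Equiv.sumCongr_apply, h2, e₂]

lemma Fgraph_adj_sum {k : ℕ} {a b : Fin k} (h : (Fgraph k).Adj a b) :
    (a : ℕ) + (b : ℕ) + 2 ≤ k + 1 := by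
  rw [Fgraph, SimpleGraph.fromRel_adj] at h
  obtain ⟨-, h | h⟩ := h <;> obtain ⟨h1, h2, h3⟩ := h <;> omega

lemma Fgraph_adj_of {k : ℕ} {a b : Fin k} (hne : a ≠ b)
    (h : (a : ℕ) + (b : ℕ) + 2 ≤ k + 1) : (Fgraph k).Adj a b := by
  rw [Fgraph, SimpleGraph.fromRel_adj]
  refine ⟨hne, ?_⟩
  have hne' : (a : ℕ) ≠ (b : ℕ) := fun hc => hne (Fin.ext hc)
  rcases lt_or_gt_of_ne hne' with hlt | hlt
  · exact Or.inl ⟨by omega, by omega, by omega⟩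
  · exact Or.inr ⟨by omega, by omega, by omega⟩

/-- For a graph `G` of order `n` with at least one edge and `δ(G) = n - k` where
`2 ≤ k ≤ n - 1`, `str(G) = n + δ(G)` iff the complement of `G` contains `F_k`. -/
theorem strength_eq_iff_compl_containsF (n k : ℕ) (G : SimpleGraph (Fin n))
    [DecidableRel G.Adj] (hE : G.edgeSet.Nonempty)
    (hδ : G.minDegree = n - k) (hk₁ : 2 ≤ k) (hk₂ : k ≤ n - 1) :
    str G = n + G.minDegree ↔ ContainsF Gᶜ k := by
  classical
  have hkn : k + 1 ≤ n := by omega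
  have hAdj : ∃ u v, G.Adj u v := by
    obtain ⟨e, he⟩ := hE
    revert he
    refine e.ind (fun u v he => ?_)
    exact ⟨u, v, he⟩
  -- basic facts about the sets involved
  have hBdd : ∀ f : Fin n ≃ Fin n,
      BddAbove {s | ∃ u v, G.Adj u v ∧ s = ((f u : ℕ) + 1) + ((f v : ℕ) + 1)} := by
    intro f
    refine ⟨2 * n, ?_⟩
    rintro s ⟨u, v, -, rfl⟩
    have := (f u).isLt
    have := (f v).isLt
    omega
  have hNe : ∀ f : Fin n ≃ Fin n,
      {s | ∃ u v, G.Adj u v ∧ s = ((f u : ℕ) + 1) + ((f v : ℕ) + 1)}.Nonempty := by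
    intro f
    obtain ⟨u, v, huv⟩ := hAdj
    exact ⟨_, u, v, huv, rfl⟩
  -- lower bound
  have hlow : ∀ f : Fin n ≃ Fin n, n + (n - k) ≤ strOf G f := by
    intro f
    set u := f.symm ⟨n - 1, by omega⟩ with hu
    have hfu : (f u : ℕ) = n - 1 := by rw [hu, Equiv.apply_symm_apply]
    have hdeg : n - k ≤ G.degree u := hδ ▸ G.minDegree_le_degree u
    have hbig : ∃ v ∈ G.neighborFinset u, n - k - 1 ≤ (f v : ℕ) := by
      by_contra hcon
      push_neg at hcon
      have hsub : (G.neighborFinset u).image f ⊆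
          Finset.univ.filter (fun w : Fin n => (w : ℕ) < n - k - 1) := by
        intro w hw
        obtain ⟨v, hv, rfl⟩ := Finset.mem_image.mp hw
        exact Finset.mem_filter.mpr ⟨Finset.mem_univ _, hcon v hv⟩
      have hc1 : ((G.neighborFinset u).image f).card = G.degree u := by
        rw [Finset.card_image_of_injective _ f.injective]
        rfl
      have := Finset.card_le_card hsub
      rw [hc1, card_filter_val_lt n (n - k - 1) (by omega)] at this
      omega
    obtain ⟨v, hv, hle⟩ := hbig
    have hadj : G.Adj u v := (SimpleGraph.mem_neighborFinset G u v).mp hv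
    have hmem : ((f u : ℕ) + 1) + ((f v : ℕ) + 1) ∈
        {s | ∃ u v, G.Adj u v ∧ s = ((f u : ℕ) + 1) + ((f v : ℕ) + 1)} :=
      ⟨u, v, hadj, rfl⟩
    have hss := le_csSup (hBdd f) hmem
    have : n + (n - k) ≤ ((f u : ℕ) + 1) + ((f v : ℕ) + 1) := by omega
    exact this.trans hss
  have hSne : {s | ∃ f : Fin n ≃ Fin n, s = strOf G f}.Nonempty :=
    ⟨strOf G (Equiv.refl _), Equiv.refl _, rfl⟩
  have hstrlow : n + (n - k) ≤ str G :=
    le_csInf hSne (by rintro s ⟨f, rfl⟩; exact hlow f)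
  rw [hδ]
  constructor
  · -- forward direction
    intro h
    have hmem := Nat.sInf_mem hSne
    rw [show sInf {s | ∃ f : Fin n ≃ Fin n, s = strOf G f} = str G from rfl, h] at hmem
    obtain ⟨f, hf⟩ := hmem
    set φ : Fin k → Fin n := fun a => f.symm ⟨n - 1 - (a : ℕ), by omega⟩ with hφdef
    have hfφ : ∀ a : Fin k, (f (φ a) : ℕ) = n - 1 - (a : ℕ) := by
      intro a
      rw [hφdef]
      simp only []
      rw [Equiv.apply_symm_apply]
    have hφinj : Function.Injective φ := by
      intro a b hab
      have := congrArg (fun x => (f x : ℕ)) hab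
      simp only [hfφ] at this
      have ha := a.isLt
      have hb := b.isLt
      exact Fin.ext (by omega)
    have hhom : ∀ a b : Fin k, (Fgraph k).Adj a b → Gᶜ.Adj (φ a) (φ b) := by
      intro a b hab
      have hsum := Fgraph_adj_sum hab
      have hne : φ a ≠ φ b := fun hc => hab.ne (hφinj hc)
      rw [SimpleGraph.compl_adj]
      refine ⟨hne, fun hGadj => ?_⟩
      have hmem2 : ((f (φ a) : ℕ) + 1) + ((f (φ b) : ℕ) + 1) ∈
          {s | ∃ u v, G.Adj u v ∧ s = ((f u : ℕ) + 1) + ((f v : ℕ) + 1)} :=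
        ⟨φ a, φ b, hGadj, rfl⟩
      have hss := le_csSup (hBdd f) hmem2
      rw [show sSup {s | ∃ u v, G.Adj u v ∧ s = ((f u : ℕ) + 1) + ((f v : ℕ) + 1)}
        = strOf G f from rfl, ← hf] at hss
      have ha := a.isLt
      have hb := b.isLt
      rw [hfφ a, hfφ b] at hss
      omega
    exact ⟨⟨φ, fun {a b} hab => hhom a b hab⟩, hφinj⟩
  · -- backward direction
    rintro ⟨φ, hφinj⟩
    set g : Fin k → Fin n := fun a => ⟨n - 1 - (a : ℕ), by omega⟩ with hgdef
    have hginj : Function.Injective g := by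
      intro a b hab
      have := congrArg Fin.val hab
      simp only [hgdef] at this
      have ha := a.isLt
      have hb := b.isLt
      exact Fin.ext (by omega)
    obtain ⟨σ, hσ⟩ := exists_perm_comp (fun a => φ a) g hφinj hginj
    have hup : strOf G σ ≤ n + (n - k) := by
      apply csSup_le (hNe σ)
      rintro s ⟨u, v, huv, rfl⟩
      by_contra hgt
      push_neg at hgt
      have hu' := (σ u).isLt
      have hv' := (σ v).isLt
      -- both labels are large
      have hula : n - k ≤ (σ u : ℕ) := by omega
      have hvla : n - k ≤ (σ v : ℕ) := by omega
      set a : Fin k := ⟨n - 1 - (σ u : ℕ), by omega⟩ with hadef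
      set b : Fin k := ⟨n - 1 - (σ v : ℕ), by omega⟩ with hbdef
      have hga : σ (φ a) = σ u := by
        rw [hσ a]
        apply Fin.ext
        simp only [hgdef, hadef]
        omega
      have hgb : σ (φ b) = σ v := by
        rw [hσ b]
        apply Fin.ext
        simp only [hgdef, hbdef]
        omega
      have hua : φ a = u := σ.injective hga
      have hvb : φ b = v := σ.injective hgb
      have hne : a ≠ b := by
        intro hc
        exact huv.ne (by rw [← hua, ← hvb, hc])
      have hsum : (a : ℕ) + (b : ℕ) + 2 ≤ k + 1 := by
        simp only [hadef, hbdef]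
        omega
      have hFadj := Fgraph_adj_of hne hsum
      have := φ.map_rel hFadj
      rw [hua, hvb, SimpleGraph.compl_adj] at this
      exact this.2 huv
    have hle : str G ≤ strOf G σ := Nat.sInf_le ⟨σ, rfl⟩
    omega
end

section
/- Let G be a finite simple graph of order n with at least one edge whose independence number satisfies β(G) = k, where k is an integer with 2 ≤ k ≤ ⌈n/2⌉. Then str(G) = 2n − 2β(G) + 1 if and only if the complement of G contains F_{2k−1} as a subgraph. -/
open SimpleGraph

section Aux

variable {n : ℕ}

lemma sumSet_bddAbove (G : SimpleGraph (Fin n)) (f : Fin n ≃ Fin n) :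
    BddAbove {s | ∃ u v, G.Adj u v ∧ s = ((f u : ℕ) + 1) + ((f v : ℕ) + 1)} := by
  refine ⟨2 * n, ?_⟩
  rintro s ⟨u, v, _, rfl⟩
  have h1 : (f u : ℕ) < n := (f u).2
  have h2 : (f v : ℕ) < n := (f v).2
  omega

lemma strOf_le (G : SimpleGraph (Fin n)) (f : Fin n ≃ Fin n) (B : ℕ)
    (h : ∀ u v, G.Adj u v → ((f u : ℕ) + 1) + ((f v : ℕ) + 1) ≤ B) : strOf G f ≤ B := by
  apply csSup_le'
  rintro s ⟨u, v, huv, rfl⟩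
  exact h u v huv

lemma le_strOf (G : SimpleGraph (Fin n)) (f : Fin n ≃ Fin n) {u v : Fin n} (h : G.Adj u v) :
    ((f u : ℕ) + 1) + ((f v : ℕ) + 1) ≤ strOf G f :=
  le_csSup (sumSet_bddAbove G f) ⟨u, v, h, rfl⟩

lemma indep_card_le (G : SimpleGraph (Fin n)) (S : Finset (Fin n))
    (hS : ∀ u ∈ S, ∀ v ∈ S, u ≠ v → ¬ G.Adj u v) : S.card ≤ indepNumber G := by
  apply le_csSup
  · refine ⟨n, ?_⟩
    rintro m ⟨T, _, rfl⟩
    simpa using T.card_le_univ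
  · exact ⟨S, hS, rfl⟩

/-- Lower bound: every numbering has strength at least `2n - 2k + 1`. -/
lemma lower_bound (G : SimpleGraph (Fin n)) (k : ℕ) (hβ : indepNumber G = k)
    (hkn : k + 1 ≤ n) (f : Fin n ≃ Fin n) : 2 * n - 2 * k + 1 ≤ strOf G f := by
  have hc : n - (k + 1) < n := by omega
  set c : ℕ := n - (k + 1) with hc'
  set S : Finset (Fin n) := Finset.univ.filter (fun u => c ≤ (f u : ℕ)) with hS
  have hcard : S.card = k + 1 := by
    have h1 : S.card = (Finset.Ici (⟨c, hc⟩ : Fin n)).card := by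
      apply Finset.card_bij (fun u _ => f u)
      · intro u hu
        simp only [hS, Finset.mem_filter] at hu
        simpa [Fin.le_def] using hu.2
      · intro u _ v _ h
        exact f.injective h
      · intro m hm
        refine ⟨f.symm m, ?_, by simp⟩
        simp only [hS, Finset.mem_filter, Finset.mem_univ, true_and, Equiv.apply_symm_apply]
        simpa [Fin.le_def] using hm
    rw [h1, Fin.card_Ici]
    simp only [Fin.val_mk]
    omega
  have hnotindep : ¬ (∀ u ∈ S, ∀ v ∈ S, u ≠ v → ¬ G.Adj u v) := by
    intro h
    have := indep_card_le G S h
    omega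
  push_neg at hnotindep
  obtain ⟨u, hu, v, hv, huv, hadj⟩ := hnotindep
  simp only [hS, Finset.mem_filter, Finset.mem_univ, true_and] at hu hv
  have hne : (f u : ℕ) ≠ (f v : ℕ) := by
    intro h
    exact huv (f.injective (Fin.ext h))
  have hun : (f u : ℕ) < n := (f u).2
  have hvn : (f v : ℕ) < n := (f v).2
  have := le_strOf G f hadj
  omega

end Aux

/-- For a graph `G` of order `n` with at least one edge and independence number
`β(G) = k` where `2 ≤ k ≤ ⌈n/2⌉`, `str(G) = 2n - 2β(G) + 1` iff the complement of
`G` contains `F_{2k-1}` as a subgraph. -/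
theorem strength_eq_indep_iff (n k : ℕ) (G : SimpleGraph (Fin n))
    (hE : G.edgeSet.Nonempty) (hβ : indepNumber G = k)
    (hk₁ : 2 ≤ k) (hk₂ : k ≤ (n + 1) / 2) :
    str G = 2 * n - 2 * indepNumber G + 1 ↔ ContainsF Gᶜ (2 * k - 1) := by
  classical
  rw [hβ]
  have h2k : 2 * k - 1 ≤ n := by omega
  have hkn : k + 1 ≤ n := by omega
  constructor
  · -- forward: equality gives an embedding of F_{2k-1} into Gᶜ
    intro h
    have hne : {s | ∃ f : Fin n ≃ Fin n, s = strOf G f}.Nonempty :=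
      ⟨strOf G (Equiv.refl _), Equiv.refl _, rfl⟩
    obtain ⟨f, hf⟩ := Nat.sInf_mem hne
    have hfval : strOf G f = 2 * n - 2 * k + 1 := by rw [← hf]; exact h
    have hlt : ∀ a : Fin (2 * k - 1), n - 1 - (a : ℕ) < n := fun a => by
      have := a.2; omega
    set φ : Fin (2 * k - 1) → Fin n := fun a => f.symm ⟨n - 1 - (a : ℕ), hlt a⟩ with hφ
    have hφval : ∀ a, (f (φ a) : ℕ) = n - 1 - (a : ℕ) := fun a => by
      simp [hφ]
    have hφinj : Function.Injective φ := by
      intro a b hab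
      have h1 := congrArg (fun x => (f x : ℕ)) hab
      simp only [hφval] at h1
      have ha := a.2; have hb := b.2
      exact Fin.ext (by omega)
    have key : ∀ a b : Fin (2 * k - 1), (a : ℕ) + (b : ℕ) ≤ 2 * k - 2 →
        ¬ G.Adj (φ a) (φ b) := by
      intro a b hab hadj
      have hle := le_strOf G f hadj
      rw [hfval, hφval a, hφval b] at hle
      have ha := a.2; have hb := b.2
      omega
    refine ⟨⟨φ, ?_⟩, hφinj⟩
    intro a b hab
    rw [Fgraph, SimpleGraph.fromRel_adj] at hab
    obtain ⟨hne', hrel⟩ := hab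
    rw [SimpleGraph.compl_adj]
    refine ⟨fun hc => hne' (hφinj hc), ?_⟩
    have ha := a.2; have hb := b.2
    rcases hrel with ⟨h1, h2, h3⟩ | ⟨h1, h2, h3⟩
    · exact key a b (by omega)
    · exact fun hadj => key b a (by omega) hadj.symm
  · -- backward: embedding of F_{2k-1} into Gᶜ gives a good numbering
    rintro ⟨Φ, hΦinj⟩
    set φ : Fin (2 * k - 1) → Fin n := ⇑Φ with hφdef
    have hlt : ∀ a : Fin (2 * k - 1), n - 1 - (a : ℕ) < n := fun a => by
      have := a.2; omega
    set ψ : Fin (2 * k - 1) → Fin n := fun a => ⟨n - 1 - (a : ℕ), hlt a⟩ with hψ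
    have hψinj : Function.Injective ψ := by
      intro a b hab
      have h1 := congrArg Fin.val hab
      simp only [hψ] at h1
      have ha := a.2; have hb := b.2
      exact Fin.ext (by omega)
    have hcc : Fintype.card ((Set.range φ)ᶜ : Set (Fin n)) =
        Fintype.card ((Set.range ψ)ᶜ : Set (Fin n)) := by
      rw [Fintype.card_compl_set, Fintype.card_compl_set,
        Set.card_range_of_injective hΦinj, Set.card_range_of_injective hψinj]
    set eA : Fin (2 * k - 1) ≃ Set.range φ := Equiv.ofInjective φ hΦinj with heA
    set eB : Fin (2 * k - 1) ≃ Set.range ψ := Equiv.ofInjective ψ hψinj with heB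
    set ec : ((Set.range φ)ᶜ : Set (Fin n)) ≃ ((Set.range ψ)ᶜ : Set (Fin n)) :=
      Fintype.equivOfCardEq hcc with hec
    set f : Fin n ≃ Fin n :=
      (Equiv.Set.sumCompl (Set.range φ)).symm.trans
        ((Equiv.sumCongr (eA.symm.trans eB) ec).trans (Equiv.Set.sumCompl (Set.range ψ)))
      with hfdef
    have hfφ : ∀ a, f (φ a) = ψ a := by
      intro a
      have h1 : (Equiv.Set.sumCompl (Set.range φ)).symm (φ a) = Sum.inl ⟨φ a, ⟨a, rfl⟩⟩ :=
        Equiv.Set.sumCompl_symm_apply_of_mem (Set.mem_range_self a)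
      have h2 : eA.symm ⟨φ a, ⟨a, rfl⟩⟩ = a := by
        rw [Equiv.symm_apply_eq, heA, Equiv.ofInjective_apply]
      simp only [hfdef, Equiv.trans_apply, h1, Equiv.sumCongr_apply, Sum.map_inl,
        Equiv.Set.sumCompl_apply_inl, h2]
      rw [heB, Equiv.ofInjective_apply]
    have hfnot : ∀ u : Fin n, u ∉ Set.range φ → (f u : ℕ) + 1 ≤ n - (2 * k - 1) := by
      intro u hu
      have h1 : (Equiv.Set.sumCompl (Set.range φ)).symm u = Sum.inr ⟨u, hu⟩ :=
        Equiv.Set.sumCompl_symm_apply_of_notMem hu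
      have h2 : f u = ↑(ec ⟨u, hu⟩) := by
        simp only [hfdef, Equiv.trans_apply, h1, Equiv.sumCongr_apply, Sum.map_inr,
          Equiv.Set.sumCompl_apply_inr]
      have h3 : (f u) ∉ Set.range ψ := by rw [h2]; exact (ec ⟨u, hu⟩).2
      by_contra hcon
      push_neg at hcon
      apply h3
      have hfu := (f u).2
      rw [Set.mem_range]
      refine ⟨⟨n - 1 - (f u : ℕ), by omega⟩, ?_⟩
      apply Fin.ext
      simp only [hψ]
      omega
    have hbound : strOf G f ≤ 2 * n - 2 * k + 1 := by
      apply strOf_le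
      intro u v hadj
      have hun : (f u : ℕ) < n := (f u).2
      have hvn : (f v : ℕ) < n := (f v).2
      by_cases hu : u ∈ Set.range φ <;> by_cases hv : v ∈ Set.range φ
      · obtain ⟨a, rfl⟩ := hu; obtain ⟨b, rfl⟩ := hv
        rw [hfφ a, hfφ b]
        have ha := a.2; have hb := b.2
        have hab : ¬ ((a : ℕ) + (b : ℕ) ≤ 2 * k - 2) := by
          intro hle
          have hne : a ≠ b := by
            intro hc; rw [hc] at hadj; exact G.irrefl hadj
          have hFadj : (Fgraph (2 * k - 1)).Adj a b := by
            rw [Fgraph, SimpleGraph.fromRel_adj]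
            refine ⟨hne, ?_⟩
            rcases Nat.lt_or_ge (a : ℕ) (b : ℕ) with hab' | hab'
            · left; refine ⟨by omega, by omega, by omega⟩
            · have hba : (b : ℕ) < (a : ℕ) := by
                rcases Nat.lt_or_ge (b : ℕ) (a : ℕ) with h' | h'
                · exact h'
                · exact absurd (Fin.ext (by omega)) hne
              right; refine ⟨by omega, by omega, by omega⟩
          have := ((G.compl_adj (Φ a) (Φ b)).mp (Φ.map_adj hFadj)).2
          exact this hadj
        simp only [hψ]
        omega
      · obtain ⟨a, rfl⟩ := hu
        rw [hfφ a]
        have := hfnot v hv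
        have ha := a.2
        simp only [hψ]
        omega
      · obtain ⟨b, rfl⟩ := hv
        rw [hfφ b]
        have := hfnot u hu
        have hb := b.2
        simp only [hψ]
        omega
      · have := hfnot u hu
        have := hfnot v hv
        omega
    have hle : str G ≤ 2 * n - 2 * k + 1 :=
      le_trans (Nat.sInf_le ⟨f, rfl⟩) hbound
    have hge : 2 * n - 2 * k + 1 ≤ str G := by
      have hne : {s | ∃ g : Fin n ≃ Fin n, s = strOf G g}.Nonempty :=
        ⟨strOf G (Equiv.refl _), Equiv.refl _, rfl⟩
      obtain ⟨g, hg⟩ := Nat.sInf_mem hne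
      rw [str, hg]
      exact lower_bound G k hβ hkn g
    omega
end

section
/- For every integer n ≥ 1, the odd cycle C_{2n+1} attains the bound str(G) ≥ 2|V(G)| − 2·min{α(G), α₁(G), β(G), β₁(G)} + 1 with equality; that is, str(C_{2n+1}) = 2(2n+1) − 2·min{α(C_{2n+1}), α₁(C_{2n+1}), β(C_{2n+1}), β₁(C_{2n+1})} + 1. -/
open SimpleGraph

open SimpleGraph Finset

private lemma modHelper (a b m : ℕ) (hm : 2 ≤ m) (ha : a < m) (hb : b < m) :
    ((m - b) + a) % m = 1 ↔ (a = b + 1 ∨ (a = 0 ∧ b + 1 = m)) := by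
  rcases Nat.lt_or_ge ((m - b) + a) m with h | h
  · rw [Nat.mod_eq_of_lt h]
    omega
  · have h' : m ≤ m - b + a := h
    have hx : m - b + a - m < m := by omega
    rw [Nat.mod_eq_sub_mod h', Nat.mod_eq_of_lt hx]
    omega

private lemma cycAdj {n : ℕ} (hn : 1 ≤ n) (u v : Fin (2 * n + 1)) :
    (cycleGraph (2 * n + 1)).Adj u v ↔
      (u.val + 1 = v.val ∨ v.val + 1 = u.val ∨
        (u.val = 0 ∧ v.val = 2 * n) ∨ (v.val = 0 ∧ u.val = 2 * n)) := by
  have hu := u.isLt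
  have hv := v.isLt
  have hm : 2 ≤ 2 * n + 1 := by omega
  rw [cycleGraph_adj', Fin.sub_def, Fin.sub_def]
  simp only
  rw [modHelper _ _ _ hm hu hv, modHelper _ _ _ hm hv hu]
  omega

private lemma succ_val {n : ℕ} (hn : 1 ≤ n) (v : Fin (2 * n + 1)) :
    ((v + 1 : Fin (2 * n + 1)) : ℕ) = if (v : ℕ) = 2 * n then 0 else (v : ℕ) + 1 := by
  have hv := v.isLt
  have h1 : ((1 : Fin (2 * n + 1)) : ℕ) = 1 := by
    rw [Fin.val_one']
    exact Nat.mod_eq_of_lt (by omega)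
  rw [Fin.val_add, h1]
  split_ifs with h
  · rw [h]
    simp [Nat.mod_self]
  · exact Nat.mod_eq_of_lt (by omega)

private lemma adj_succ {n : ℕ} (hn : 1 ≤ n) (v : Fin (2 * n + 1)) :
    (cycleGraph (2 * n + 1)).Adj v (v + 1) := by
  rw [cycAdj hn]
  rw [succ_val hn]
  have hv := v.isLt
  split_ifs with h <;> omega

private lemma ne_succ {n : ℕ} (hn : 1 ≤ n) (v : Fin (2 * n + 1)) : v ≠ v + 1 := by
  intro h
  have := congrArg Fin.val h
  rw [succ_val hn] at this
  have hv := v.isLt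
  split_ifs at this <;> omega

private lemma indep_le {n : ℕ} (hn : 1 ≤ n) (S : Finset (Fin (2 * n + 1)))
    (hS : ∀ u ∈ S, ∀ v ∈ S, u ≠ v → ¬ (cycleGraph (2 * n + 1)).Adj u v) :
    S.card ≤ n := by
  have hdisj : Disjoint S (S.image (· + 1)) := by
    rw [Finset.disjoint_right]
    intro w hw hwS
    obtain ⟨u, hu, rfl⟩ := Finset.mem_image.mp hw
    exact hS u hu (u + 1) hwS (ne_succ hn u) (adj_succ hn u)
  have hinj : Function.Injective (fun v : Fin (2 * n + 1) => v + 1) := by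
    intro a b h
    exact add_right_cancel h
  have h1 : (S ∪ S.image (· + 1)).card ≤ 2 * n + 1 := by
    calc (S ∪ S.image (· + 1)).card ≤ Fintype.card (Fin (2 * n + 1)) := Finset.card_le_univ _
    _ = 2 * n + 1 := Fintype.card_fin _
  rw [Finset.card_union_of_disjoint hdisj, Finset.card_image_of_injective _ hinj] at h1
  omega

/-- The vertex `k mod (2n+1)` of the cycle. -/
private def vc {n : ℕ} (k : ℕ) : Fin (2 * n + 1) := ⟨k % (2 * n + 1), Nat.mod_lt _ (by omega)⟩

private lemma vc_val {n : ℕ} (k : ℕ) (hk : k < 2 * n + 1) : ((vc k : Fin (2 * n + 1)) : ℕ) = k :=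
  Nat.mod_eq_of_lt hk

private lemma sym2_filter_subset {m : ℕ} (a b : Fin m) :
    (Finset.univ.filter (· ∈ s(a, b))) ⊆ {a, b} := by
  intro v hv
  simp only [Finset.mem_filter, Sym2.mem_iff] at hv
  simp only [Finset.mem_insert, Finset.mem_singleton]
  tauto

private lemma sym2_card_le {m : ℕ} (e : Sym2 (Fin m)) :
    (Finset.univ.filter (· ∈ e)).card ≤ 2 := by
  induction e using Sym2.ind with
  | _ a b =>
    refine le_trans (Finset.card_le_card (sym2_filter_subset a b)) ?_
    exact le_trans (Finset.card_insert_le _ _) (by simp)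

private lemma sym2_card_eq {m : ℕ} (a b : Fin m) (hab : a ≠ b) :
    (Finset.univ.filter (· ∈ s(a, b))).card = 2 := by
  have h : (Finset.univ.filter (· ∈ s(a, b))) = {a, b} := by
    apply Finset.Subset.antisymm (sym2_filter_subset a b)
    intro v hv
    simp only [Finset.mem_insert, Finset.mem_singleton] at hv
    simp only [Finset.mem_filter, Finset.mem_univ, true_and, Sym2.mem_iff]
    tauto
  rw [h, Finset.card_pair hab]

private lemma edgecover_ge {n : ℕ} (hn : 1 ≤ n) (E : Finset (Sym2 (Fin (2 * n + 1))))
    (h2 : ∀ v : Fin (2 * n + 1), ∃ e ∈ E, v ∈ e) : n ≤ E.card := by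
  choose g hg1 hg2 using h2
  have key := Finset.card_le_mul_card_image_of_maps_to
    (f := g) (s := Finset.univ) (t := E) (fun v _ => hg1 v) 2 ?_
  · rw [Finset.card_univ, Fintype.card_fin] at key
    omega
  · intro e _
    refine le_trans (Finset.card_le_card ?_) (sym2_card_le e)
    intro v hv
    simp only [Finset.mem_filter, Finset.mem_univ, true_and] at hv ⊢
    exact hv ▸ hg2 v

private lemma matching_le {n : ℕ} (hn : 1 ≤ n) (M : Finset (Sym2 (Fin (2 * n + 1))))
    (h1 : ∀ e ∈ M, e ∈ (cycleGraph (2 * n + 1)).edgeSet)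
    (h2 : ∀ e ∈ M, ∀ e' ∈ M, e ≠ e' → ∀ v : Fin (2 * n + 1), v ∈ e → v ∉ e') :
    M.card ≤ n := by
  have key : ∀ e ∈ M, (Finset.univ.filter (· ∈ e)).card = 2 := by
    intro e he
    have hd : ¬ e.IsDiag := (cycleGraph (2 * n + 1)).not_isDiag_of_mem_edgeSet (h1 e he)
    revert hd
    induction e using Sym2.ind with
    | _ a b =>
      intro hd
      refine sym2_card_eq a b (fun h => hd ?_)
      rw [h, Sym2.isDiag_iff_proj_eq]
  have hdisj : ∀ x ∈ M, ∀ y ∈ M, x ≠ y →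
      Disjoint (Finset.univ.filter (· ∈ x)) (Finset.univ.filter (· ∈ y)) := by
    intro x hx y hy hxy
    rw [Finset.disjoint_left]
    intro v hv hv'
    simp only [Finset.mem_filter, Finset.mem_univ, true_and] at hv hv'
    exact h2 x hx y hy hxy v hv hv'
  have hb := Finset.card_biUnion hdisj
  have hle : (M.biUnion (fun e => Finset.univ.filter (· ∈ e))).card ≤ 2 * n + 1 := by
    calc _ ≤ Fintype.card (Fin (2 * n + 1)) := Finset.card_le_univ _
    _ = 2 * n + 1 := Fintype.card_fin _
  rw [hb, Finset.sum_congr rfl key, Finset.sum_const, smul_eq_mul] at hle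
  omega

private lemma matching_witness {n : ℕ} (hn : 1 ≤ n) :
    ∃ M : Finset (Sym2 (Fin (2 * n + 1))),
      (∀ e ∈ M, e ∈ (cycleGraph (2 * n + 1)).edgeSet) ∧
      (∀ e ∈ M, ∀ e' ∈ M, e ≠ e' → ∀ v : Fin (2 * n + 1), v ∈ e → v ∉ e') ∧ M.card = n := by
  refine ⟨(Finset.range n).image (fun t => s(vc (2 * t), vc (2 * t + 1))), ?_, ?_, ?_⟩
  · intro e he
    obtain ⟨t, ht, rfl⟩ := Finset.mem_image.mp he
    rw [Finset.mem_range] at ht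
    rw [SimpleGraph.mem_edgeSet, cycAdj hn, vc_val _ (by omega), vc_val _ (by omega)]
    omega
  · intro e he e' he' hne v hv hv'
    obtain ⟨t, ht, rfl⟩ := Finset.mem_image.mp he
    obtain ⟨t', ht', rfl⟩ := Finset.mem_image.mp he'
    rw [Finset.mem_range] at ht ht'
    rw [Sym2.mem_iff] at hv hv'
    have h1 : (v : ℕ) = 2 * t ∨ (v : ℕ) = 2 * t + 1 := by
      rcases hv with h | h <;> rw [h] <;> [left; right] <;> exact vc_val _ (by omega)
    have h2 : (v : ℕ) = 2 * t' ∨ (v : ℕ) = 2 * t' + 1 := by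
      rcases hv' with h | h <;> rw [h] <;> [left; right] <;> exact vc_val _ (by omega)
    have : t = t' := by omega
    exact hne (by rw [this])
  · rw [Finset.card_image_of_injOn, Finset.card_range]
    intro t ht t' ht' h
    rw [Finset.mem_coe, Finset.mem_range] at ht ht'
    rw [Sym2.eq_iff] at h
    have h1 := vc_val (n := n) (2 * t) (by omega)
    have h2 := vc_val (n := n) (2 * t + 1) (by omega)
    have h3 := vc_val (n := n) (2 * t') (by omega)
    have h4 := vc_val (n := n) (2 * t' + 1) (by omega)
    rcases h with ⟨ha, hb⟩ | ⟨ha, hb⟩ <;>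
      [have := congrArg Fin.val ha; have := congrArg Fin.val ha] <;> omega

private lemma indep_witness {n : ℕ} (hn : 1 ≤ n) :
    ∃ S : Finset (Fin (2 * n + 1)),
      (∀ u ∈ S, ∀ v ∈ S, u ≠ v → ¬ (cycleGraph (2 * n + 1)).Adj u v) ∧ S.card = n := by
  refine ⟨(Finset.range n).image (fun t => vc (2 * t + 1)), ?_, ?_⟩
  · intro u hu v hv huv hadj
    obtain ⟨t, ht, rfl⟩ := Finset.mem_image.mp hu
    obtain ⟨t', ht', rfl⟩ := Finset.mem_image.mp hv
    rw [Finset.mem_range] at ht ht'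
    rw [cycAdj hn, vc_val _ (by omega), vc_val _ (by omega)] at hadj
    have : t ≠ t' := fun h => huv (by rw [h])
    omega
  · rw [Finset.card_image_of_injOn, Finset.card_range]
    intro t ht t' ht' h
    rw [Finset.mem_coe, Finset.mem_range] at ht ht'
    have := congrArg Fin.val h
    rw [vc_val _ (by omega), vc_val _ (by omega)] at this
    omega

private lemma vertexcover_ge {n : ℕ} (hn : 1 ≤ n) (S : Finset (Fin (2 * n + 1)))
    (hS : ∀ u v, (cycleGraph (2 * n + 1)).Adj u v → u ∈ S ∨ v ∈ S) : n ≤ S.card := by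
  have hindep : ∀ u ∈ Sᶜ, ∀ v ∈ Sᶜ, u ≠ v → ¬ (cycleGraph (2 * n + 1)).Adj u v := by
    intro u hu v hv _ hadj
    rw [Finset.mem_compl] at hu hv
    rcases hS u v hadj with h | h <;> [exact hu h; exact hv h]
  have h1 := indep_le hn Sᶜ hindep
  have h2 : Sᶜ.card = Fintype.card (Fin (2 * n + 1)) - S.card := Finset.card_compl S
  rw [Fintype.card_fin] at h2
  have h3 : S.card ≤ 2 * n + 1 := le_trans (Finset.card_le_univ _) (by simp)
  omega

private lemma W_card {n : ℕ} (hn : 1 ≤ n) :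
    (Finset.univ.filter (fun w : Fin (2 * n + 1) => n ≤ (w : ℕ))).card = n + 1 := by
  have h : (Finset.univ.filter (fun w : Fin (2 * n + 1) => n ≤ (w : ℕ))) =
      (Finset.range (n + 1)).image (fun t => (vc (n + t) : Fin (2 * n + 1))) := by
    ext w
    simp only [Finset.mem_filter, Finset.mem_univ, true_and, Finset.mem_image,
      Finset.mem_range]
    constructor
    · intro hw
      have hw2 := w.isLt
      refine ⟨(w : ℕ) - n, by omega, ?_⟩
      apply Fin.ext
      rw [vc_val _ (by omega)]
      omega
    · rintro ⟨t, ht, rfl⟩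
      rw [vc_val _ (by omega)]
      omega
  rw [h, Finset.card_image_of_injOn, Finset.card_range]
  intro t ht t' ht' hv
  rw [Finset.mem_coe, Finset.mem_range] at ht ht'
  have := congrArg Fin.val hv
  rw [vc_val _ (by omega), vc_val _ (by omega)] at this
  omega

private lemma T_card {n : ℕ} (hn : 1 ≤ n) (f : Fin (2 * n + 1) ≃ Fin (2 * n + 1)) :
    (Finset.univ.filter (fun v : Fin (2 * n + 1) => n ≤ ((f v : Fin (2 * n + 1)) : ℕ))).card
      = n + 1 := by
  have h : (Finset.univ.filter (fun v : Fin (2 * n + 1) => n ≤ ((f v : Fin (2 * n + 1)) : ℕ)))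
      = (Finset.univ.filter (fun w : Fin (2 * n + 1) => n ≤ (w : ℕ))).image f.symm := by
    ext v
    simp only [Finset.mem_filter, Finset.mem_univ, true_and, Finset.mem_image]
    constructor
    · intro hv
      exact ⟨f v, hv, f.symm_apply_apply v⟩
    · rintro ⟨w, hw, rfl⟩
      rwa [f.apply_symm_apply]
  rw [h, Finset.card_image_of_injective _ f.symm.injective, W_card hn]

private lemma str_lower {n : ℕ} (hn : 1 ≤ n) (f : Fin (2 * n + 1) ≃ Fin (2 * n + 1)) :
    ∃ u v, (cycleGraph (2 * n + 1)).Adj u v ∧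
      2 * n + 3 ≤ (((f u : Fin (2 * n + 1)) : ℕ) + 1) + (((f v : Fin (2 * n + 1)) : ℕ) + 1) := by
  set T := Finset.univ.filter (fun v : Fin (2 * n + 1) => n ≤ ((f v : Fin (2 * n + 1)) : ℕ))
    with hT
  by_contra hcon
  push_neg at hcon
  have hindep : ∀ u ∈ T, ∀ v ∈ T, u ≠ v → ¬ (cycleGraph (2 * n + 1)).Adj u v := by
    intro u hu v hv huv hadj
    rw [hT, Finset.mem_filter] at hu hv
    have h1 : ((f u : Fin (2 * n + 1)) : ℕ) ≠ ((f v : Fin (2 * n + 1)) : ℕ) := by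
      intro h
      exact huv (f.injective (Fin.ext h))
    have := hcon u v hadj
    omega
  have := indep_le hn T hindep
  rw [T_card hn f] at this
  omega

/-- The optimal numbering: position `2t` gets label `t`, position `2t+1` gets `2n - t`. -/
private def gfun {n : ℕ} : Fin (2 * n + 1) → Fin (2 * n + 1) := fun j =>
  ⟨if (j : ℕ) % 2 = 0 then (j : ℕ) / 2 else 2 * n - (j : ℕ) / 2, by
    have := j.isLt
    split_ifs <;> omega⟩

private lemma gfun_inj {n : ℕ} : Function.Injective (gfun (n := n)) := by
  intro a b h
  have ha := a.isLt
  have hb := b.isLt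
  have h2 := congrArg Fin.val h
  simp only [gfun] at h2
  apply Fin.ext
  split_ifs at h2 <;> omega

private noncomputable def gequiv {n : ℕ} : Fin (2 * n + 1) ≃ Fin (2 * n + 1) :=
  Equiv.ofBijective gfun (Finite.injective_iff_bijective.mp gfun_inj)

private lemma gfun_bound {n : ℕ} (hn : 1 ≤ n) (u v : Fin (2 * n + 1))
    (h : (cycleGraph (2 * n + 1)).Adj u v) :
    ((gfun u : Fin (2 * n + 1)) : ℕ) + 1 + (((gfun v : Fin (2 * n + 1)) : ℕ) + 1)
      ≤ 2 * n + 3 := by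
  rw [cycAdj hn] at h
  have hu := u.isLt
  have hv := v.isLt
  simp only [gfun]
  split_ifs <;> omega

/-- For every `n ≥ 1`, the odd cycle `C_{2n+1}` attains the bound
`str(G) ≥ 2|V(G)| - 2·min{α(G), α₁(G), β(G), β₁(G)} + 1` with equality. -/
theorem oddCycle_attains_bound (n : ℕ) (hn : 1 ≤ n) :
    str (SimpleGraph.cycleGraph (2 * n + 1)) =
      2 * (2 * n + 1) -
        2 * min
          (min (vertexCoverNumber (SimpleGraph.cycleGraph (2 * n + 1)))
               (edgeCoverNumber (SimpleGraph.cycleGraph (2 * n + 1))))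
          (min (indepNumber (SimpleGraph.cycleGraph (2 * n + 1)))
               (matchingNumber (SimpleGraph.cycleGraph (2 * n + 1)))) + 1 := by
  -- the strength is `2n + 3`
  have hstr : str (cycleGraph (2 * n + 1)) = 2 * n + 3 := by
    apply le_antisymm
    · refine le_trans (Nat.sInf_le ⟨gequiv, rfl⟩) ?_
      unfold strOf
      apply csSup_le'
      rintro s ⟨u, v, hadj, rfl⟩
      exact gfun_bound hn u v hadj
    · refine le_csInf ⟨strOf _ (Equiv.refl _), ⟨Equiv.refl _, rfl⟩⟩ ?_
      rintro s ⟨f, rfl⟩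
      obtain ⟨u, v, hadj, hge⟩ := str_lower hn f
      refine le_trans hge (le_csSup ⟨4 * n + 4, ?_⟩ ⟨u, v, hadj, rfl⟩)
      rintro s ⟨a, b, -, rfl⟩
      have h1 := (f a).isLt
      have h2 := (f b).isLt
      omega
  -- the matching number is `n`
  have hβ₁ : matchingNumber (cycleGraph (2 * n + 1)) = n := by
    apply le_antisymm
    · apply csSup_le'
      rintro k ⟨M, h1, h2, rfl⟩
      exact matching_le hn M h1 h2
    · obtain ⟨M, h1, h2, h3⟩ := matching_witness hn
      refine le_csSup ⟨n, ?_⟩ ⟨M, h1, h2, h3⟩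
      rintro k ⟨M', g1, g2, rfl⟩
      exact matching_le hn M' g1 g2
  -- the independence number is at least `n`
  have hβ : n ≤ indepNumber (cycleGraph (2 * n + 1)) := by
    obtain ⟨S, h1, h2⟩ := indep_witness hn
    refine le_csSup ⟨n, ?_⟩ ⟨S, h1, h2⟩
    rintro k ⟨S', g1, rfl⟩
    exact indep_le hn S' g1
  -- the vertex covering number is at least `n`
  have hα : n ≤ vertexCoverNumber (cycleGraph (2 * n + 1)) := by
    refine le_csInf ⟨Finset.univ.card, Finset.univ, fun u v _ => Or.inl (Finset.mem_univ u), rfl⟩ ?_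
    rintro k ⟨S, h1, rfl⟩
    exact vertexcover_ge hn S h1
  -- the edge covering number is at least `n`
  have hα₁ : n ≤ edgeCoverNumber (cycleGraph (2 * n + 1)) := by
    refine le_csInf ⟨(cycleGraph (2 * n + 1)).edgeFinset.card,
      (cycleGraph (2 * n + 1)).edgeFinset, fun e he => SimpleGraph.mem_edgeFinset.mp he,
      fun v => ⟨s(v, v + 1), SimpleGraph.mem_edgeFinset.mpr (adj_succ hn v),
        Sym2.mem_mk_left v (v + 1)⟩, rfl⟩ ?_
    rintro k ⟨E, h1, h2, rfl⟩
    exact edgecover_ge hn E h2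
  have h5 : min (indepNumber (cycleGraph (2 * n + 1))) (matchingNumber (cycleGraph (2 * n + 1)))
      = n := by rw [hβ₁]; exact min_eq_right hβ
  have h6 : min (min (vertexCoverNumber (cycleGraph (2 * n + 1)))
      (edgeCoverNumber (cycleGraph (2 * n + 1)))) n = n := min_eq_right (le_min hα hα₁)
  rw [hstr, h5, h6]
  omega
end
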